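/- Let n_1,…,n_t, n_0 be nonnegative integers and n = n_1 + … + n_t + n_0. For 𝛌 = (λ_1,…,λ_t,λ_0), where λ_j is a partition of n_j for j = 1,…,t and λ_0 is a symplectic partition of 2n_0, set cup(𝛌) = (λ_1 ∪ λ_1) ∪ … ∪ (λ_t ∪ λ_t) ∪ λ_0 (a symplectic partition of 2n) and d(𝛌) = (^tλ_1,…,^tλ_t, d(λ_0)). For μ = (μ_1,…,μ_t,μ_0), where μ_j is a partition of n_j and μ_0 is an orthogonal partition of 2n_0+1, define ind(μ) to be the greatest orthogonal partition of 2n+1 that is ≤ (μ_1+μ_1) + … + (μ_t+μ_t) + μ_0 in the dominance order. Then d(cup(𝛌)) = ind(d(𝛌)). -/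

import Mathlib

open Classical

namespace Wald

/-- `S f k = λ_1 + … + λ_k` (partitions are indexed from 1; index 0 is unused). -/
def S (f : ℕ → ℕ) (k : ℕ) : ℕ := ∑ j ∈ Finset.Icc 1 k, f j

/-- `f` represents a partition of `N`: nonincreasing on indices `≥ 1`,
finitely many nonzero terms, with total sum `N`. -/
structure IsPartition (f : ℕ → ℕ) (N : ℕ) : Prop where
  mono : ∀ ⦃j k : ℕ⦄, 1 ≤ j → j ≤ k → f k ≤ f j
  fin : ∃ m, ∀ j, m < j → f j = 0
  total : ∀ m, (∀ j, m < j → f j = 0) → S f m = N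

/-- multiplicity of `i` as a term of the partition -/
noncomputable def mult (f : ℕ → ℕ) (i : ℕ) : ℕ := Set.ncard {j : ℕ | 1 ≤ j ∧ f j = i}

/-- dominance order: `Dom f g ↔ f ≤ g` -/
def Dom (f g : ℕ → ℕ) : Prop := ∀ k, S f k ≤ S g k

/-- transposed partition: `(transpose f) j = #{i ≥ 1 : f i ≥ j}` for `j ≥ 1` -/
noncomputable def transpose (f : ℕ → ℕ) : ℕ → ℕ :=
  fun j => Set.ncard {i : ℕ | 1 ≤ i ∧ 1 ≤ j ∧ j ≤ f i}

/-- union of two partitions (all terms listed together in nonincreasing order);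
it is characterized by `transpose (unionP f g) = transpose f + transpose g`. -/
noncomputable def unionP (f g : ℕ → ℕ) : ℕ → ℕ :=
  transpose (fun j => transpose f j + transpose g j)

/-- the partition `(1)` -/
def one1 : ℕ → ℕ := fun j => if j = 1 then 1 else 0

/-- symplectic partition: every odd `i ≥ 1` has even multiplicity -/
def Symp (f : ℕ → ℕ) : Prop := ∀ i, Odd i → Even (mult f i)

/-- orthogonal partition: every even `i ≥ 2` has even multiplicity -/
def Orth (f : ℕ → ℕ) : Prop := ∀ i, Even i → 1 ≤ i → Even (mult f i)

/-- `λ_{2j-1} ≡ λ_{2j} (mod 2)` for all `j ≥ 1` (speciality for symplectic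
partitions of `2n` and orthogonal partitions of `2n`). -/
def SpecialPairs (f : ℕ → ℕ) : Prop := ∀ j, 1 ≤ j → f (2*j - 1) % 2 = f (2*j) % 2

/-- speciality for orthogonal partitions of `2n+1`: `λ_1` odd and
`λ_{2j} ≡ λ_{2j+1} (mod 2)` for all `j ≥ 1`. -/
def SpecialOrthOdd (f : ℕ → ℕ) : Prop :=
  Odd (f 1) ∧ ∀ j, 1 ≤ j → f (2*j) % 2 = f (2*j + 1) % 2

/-- `Jord_bp` for symplectic partitions: even `i ≥ 2` with positive multiplicity -/
def JordbpS (f : ℕ → ℕ) : Set ℕ := {i | Even i ∧ 2 ≤ i ∧ 1 ≤ mult f i}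

/-- `Jord_bp` for orthogonal partitions: odd `i ≥ 1` with positive multiplicity -/
def JordbpO (f : ℕ → ℕ) : Set ℕ := {i | Odd i ∧ 1 ≤ mult f i}

/-- the set `{i_1 > … > i_m}` of terms with odd multiplicity -/
def OddSet (f : ℕ → ℕ) : Set ℕ := {i | Odd (mult f i)}

/-- for special symplectic partitions: `{i_1 > … > i_{m'}}`, with `0` added if `m` is odd -/
def Dsymp (f : ℕ → ℕ) : Set ℕ :=
  {i | Odd (mult f i) ∨ (i = 0 ∧ Odd (OddSet f).ncard)}

/-- `a = i_{2h-1}` and `b = i_{2h}` for some `h`: consecutive elements of `Dsymp f`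
with an even number of elements of `Dsymp f` above `a`. -/
def PairedS (f : ℕ → ℕ) (a b : ℕ) : Prop :=
  b < a ∧ a ∈ Dsymp f ∧ b ∈ Dsymp f ∧ Even ((Dsymp f ∩ Set.Ioi a).ncard) ∧
    Dsymp f ∩ Set.Ioo b a = ∅

/-- intervals of a special symplectic partition of `2n` -/
def IsIntervalS (f : ℕ → ℕ) (Δ : Set ℕ) : Prop :=
  (∃ a b, PairedS f a b ∧ Δ = {i | (i = 0 ∨ 1 ≤ mult f i) ∧ b ≤ i ∧ i ≤ a}) ∨
  (∃ i, Even i ∧ (i = 0 ∨ (2 ≤ i ∧ 1 ≤ mult f i)) ∧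
    (¬ ∃ a b, PairedS f a b ∧ b ≤ i ∧ i ≤ a) ∧ Δ = {i})

/-- `a = i_{2h-1}` and `b = i_{2h}` for some `h` (orthogonal partitions of `2n`) -/
def PairedOE (f : ℕ → ℕ) (a b : ℕ) : Prop :=
  b < a ∧ a ∈ OddSet f ∧ b ∈ OddSet f ∧ Even ((OddSet f ∩ Set.Ioi a).ncard) ∧
    OddSet f ∩ Set.Ioo b a = ∅

/-- intervals of a special orthogonal partition of `2n` -/
def IsIntervalOE (f : ℕ → ℕ) (Δ : Set ℕ) : Prop :=
  (∃ a b, PairedOE f a b ∧ Δ = {i | 1 ≤ mult f i ∧ b ≤ i ∧ i ≤ a}) ∨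
  (∃ i, Odd i ∧ 1 ≤ mult f i ∧ (¬ ∃ a b, PairedOE f a b ∧ b ≤ i ∧ i ≤ a) ∧ Δ = {i})

/-- `a = i_{2h}` and `b = i_{2h+1}` for some `h ≥ 1` (orthogonal partitions of `2n+1`) -/
def PairedOO (f : ℕ → ℕ) (a b : ℕ) : Prop :=
  b < a ∧ a ∈ OddSet f ∧ b ∈ OddSet f ∧ Odd ((OddSet f ∩ Set.Ioi a).ncard) ∧
    OddSet f ∩ Set.Ioo b a = ∅

/-- intervals of a special orthogonal partition of `2n+1` (convention `i_0 = ∞`) -/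
def IsIntervalOO (f : ℕ → ℕ) (Δ : Set ℕ) : Prop :=
  (∃ b, b ∈ OddSet f ∧ OddSet f ∩ Set.Ioi b = ∅ ∧ Δ = {i | 1 ≤ mult f i ∧ b ≤ i}) ∨
  (∃ a b, PairedOO f a b ∧ Δ = {i | 1 ≤ mult f i ∧ b ≤ i ∧ i ≤ a}) ∨
  (∃ i, Odd i ∧ 1 ≤ mult f i ∧
    (¬ ((∃ b, b ∈ OddSet f ∧ OddSet f ∩ Set.Ioi b = ∅ ∧ b ≤ i) ∨
        (∃ a b, PairedOO f a b ∧ b ≤ i ∧ i ≤ a))) ∧ Δ = {i})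

/-- `J(Δ) = {j ≥ 1 : λ_j ∈ Δ}` -/
def Jset (f : ℕ → ℕ) (Δ : Set ℕ) : Set ℕ := {j | 1 ≤ j ∧ f j ∈ Δ}

/-- `ζ(λ)` for a special symplectic partition (`j_max(Δ_min) = ∞`, so the smallest
interval contributes no `-1`: its `J`-set has no greatest element). -/
noncomputable def zetaS (f : ℕ → ℕ) : ℕ → ℤ := fun j =>
  if ∃ Δ, IsIntervalS f Δ ∧ IsLeast (Jset f Δ) j then 1
  else if ∃ Δ, IsIntervalS f Δ ∧ IsGreatest (Jset f Δ) j then -1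
  else 0

/-- `ζ(λ)` for a special orthogonal partition of `2n` -/
noncomputable def zetaOE (f : ℕ → ℕ) : ℕ → ℤ := fun j =>
  if ∃ Δ, IsIntervalOE f Δ ∧ IsLeast (Jset f Δ) j then 1
  else if ∃ Δ, IsIntervalOE f Δ ∧ IsGreatest (Jset f Δ) j then -1
  else 0

/-- `J^+` for `λ1` special symplectic and `λ2` special orthogonal (of `2n2`) -/
def JplusSet (f1 f2 : ℕ → ℕ) : Set ℕ :=
  {j | 1 ≤ j ∧ Even (f1 j) ∧ Odd (f2 j) ∧
    ((∃ Δ, IsIntervalS f1 Δ ∧ IsLeast (Jset f1 Δ) j) ∨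
     (∃ Δ, IsIntervalOE f2 Δ ∧ IsLeast (Jset f2 Δ) j))}

/-- `J^-` -/
def JminusSet (f1 f2 : ℕ → ℕ) : Set ℕ :=
  {j | 1 ≤ j ∧ Even (f1 j) ∧ Odd (f2 j) ∧
    ((∃ Δ, IsIntervalS f1 Δ ∧ IsGreatest (Jset f1 Δ) j) ∨
     (∃ Δ, IsIntervalOE f2 Δ ∧ IsGreatest (Jset f2 Δ) j))}

/-- the sequence `ξ` -/
noncomputable def xi (f1 f2 : ℕ → ℕ) : ℕ → ℤ := fun j =>
  if j ∈ JplusSet f1 f2 then 1 else if j ∈ JminusSet f1 f2 then -1 else 0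

/-- partial sums of an integer-valued sequence indexed from 1 -/
def Sz (f : ℕ → ℤ) (k : ℕ) : ℤ := ∑ j ∈ Finset.Icc 1 k, f j

/-- `g` is the greatest orthogonal partition of `N` which is dominated by the
sequence `t` (used to define the Spaltenstein-type duality `d`). -/
def IsDualOf (g : ℕ → ℕ) (N : ℕ) (t : ℕ → ℕ) : Prop :=
  (IsPartition g N ∧ Orth g ∧ Dom g t) ∧
  ∀ ν, IsPartition ν N → Orth ν → Dom ν t → Dom ν g

/-- `g = d(f)` for `f` a symplectic partition of `2m`: the greatest orthogonal
partition of `2m+1` dominated by `^t(f ∪ (1))`. -/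
def IsSympDual (g : ℕ → ℕ) (m : ℕ) (f : ℕ → ℕ) : Prop :=
  IsDualOf g (2*m+1) (transpose (unionP f one1))

/-- `g = d(f)` for `f` an orthogonal partition of `2m`: the greatest orthogonal
partition of `2m` dominated by `^tf`. -/
def IsOrthDual (g : ℕ → ℕ) (m : ℕ) (f : ℕ → ℕ) : Prop :=
  IsDualOf g (2*m) (transpose f)

-- ============ auxiliary machinery ============

/-- support bound: `f j = 0` for `j > M` -/
def Supp (f : ℕ → ℕ) (M : ℕ) : Prop := ∀ j, M < j → f j = 0

/-- nonincreasing on indices `≥ 1` -/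
def Mono1 (f : ℕ → ℕ) : Prop := ∀ ⦃j k : ℕ⦄, 1 ≤ j → j ≤ k → f k ≤ f j

/-- number of indices `j ∈ [1,M]` with `f j ≥ c` (column length) -/
def Tc (f : ℕ → ℕ) (c M : ℕ) : ℕ := ((Finset.Icc 1 M).filter (fun j => c ≤ f j)).card

/-- number of boxes in the first `c` columns -/
def Phi (f : ℕ → ℕ) (c M : ℕ) : ℕ := ∑ j ∈ Finset.Icc 1 M, min (f j) c

lemma Supp.mono {f : ℕ → ℕ} {B B' : ℕ} (h : Supp f B) (hB : B ≤ B') : Supp f B' :=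
  fun j hj => h j (lt_of_le_of_lt hB hj)

lemma S_zero (f : ℕ → ℕ) : S f 0 = 0 := by simp [S]

lemma S_succ (f : ℕ → ℕ) (k : ℕ) : S f (k+1) = S f k + f (k+1) :=
  Finset.sum_Icc_succ_top (by omega) f

lemma S_congr {f g : ℕ → ℕ} (h : ∀ j, 1 ≤ j → f j = g j) (k : ℕ) : S f k = S g k :=
  Finset.sum_congr rfl fun j hj => h j (Finset.mem_Icc.mp hj).1

lemma S_add (f g : ℕ → ℕ) (k : ℕ) : S (fun j => f j + g j) k = S f k + S g k :=
  Finset.sum_add_distrib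

lemma S_mono (f : ℕ → ℕ) {k k' : ℕ} (h : k ≤ k') : S f k ≤ S f k' :=
  Finset.sum_le_sum_of_subset (Finset.Icc_subset_Icc le_rfl h)

lemma S_stab {f : ℕ → ℕ} {B k : ℕ} (hs : Supp f B) (h : B ≤ k) : S f k = S f B :=
  (Finset.sum_subset (Finset.Icc_subset_Icc le_rfl h)
    (fun x hx hnx => by
      simp only [Finset.mem_Icc] at hx hnx
      exact hs x (by omega))).symm

lemma IsPartition.S_le {f : ℕ → ℕ} {N : ℕ} (hf : IsPartition f N) (k : ℕ) : S f k ≤ N := by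
  obtain ⟨m, hm⟩ := hf.fin
  have h1 : S f (max k m) = N := hf.total _ (fun j hj => hm j (by omega))
  calc S f k ≤ S f (max k m) := S_mono f (le_max_left _ _)
    _ = N := h1

lemma IsPartition.supp {f : ℕ → ℕ} {N : ℕ} (hf : IsPartition f N) : Supp f N := by
  intro j hj
  by_contra hne
  have h1 : ∀ i, 1 ≤ i → i ≤ j → 1 ≤ f i := fun i hi hij =>
    le_trans (by omega) (hf.mono hi hij)
  have h2 : j ≤ S f j := by
    have : ∀ i ∈ Finset.Icc 1 j, 1 ≤ f i := fun i hi => by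
      have := Finset.mem_Icc.mp hi; exact h1 i this.1 this.2
    calc j = ∑ _i ∈ Finset.Icc 1 j, 1 := by simp [Nat.card_Icc]
      _ ≤ S f j := Finset.sum_le_sum this
  have := hf.S_le j
  omega

lemma IsPartition.total' {f : ℕ → ℕ} {N M : ℕ} (hf : IsPartition f N) (hM : N ≤ M) :
    S f M = N := hf.total M (fun j hj => hf.supp j (by omega))

lemma IsPartition.val_le {f : ℕ → ℕ} {N : ℕ} (hf : IsPartition f N) {j : ℕ} (hj : 1 ≤ j) :
    f j ≤ N := by
  have h1 : f j ≤ f 1 := hf.mono le_rfl hj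
  have h2 : f 1 = S f 1 := by simp [S]
  have := hf.S_le 1
  omega

-- ---- Tc lemmas ----

lemma Tc_le (f : ℕ → ℕ) (c M : ℕ) : Tc f c M ≤ M := by
  calc Tc f c M ≤ (Finset.Icc 1 M).card := Finset.card_filter_le _ _
    _ = M := by simp [Nat.card_Icc]

lemma Tc_le_supp {f : ℕ → ℕ} {B : ℕ} (hs : Supp f B) {c : ℕ} (hc : 1 ≤ c) (M : ℕ) :
    Tc f c M ≤ B := by
  have hsub : (Finset.Icc 1 M).filter (fun j => c ≤ f j) ⊆ Finset.Icc 1 B := by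
    intro j hj
    simp only [Finset.mem_filter, Finset.mem_Icc] at hj
    simp only [Finset.mem_Icc]
    refine ⟨hj.1.1, ?_⟩
    by_contra hc2
    have := hs j (by omega)
    omega
  calc Tc f c M ≤ (Finset.Icc 1 B).card := Finset.card_le_card hsub
    _ = B := by simp [Nat.card_Icc]

lemma Tc_anti (f : ℕ → ℕ) {c c' : ℕ} (h : c ≤ c') (M : ℕ) : Tc f c' M ≤ Tc f c M := by
  apply Finset.card_le_card
  intro j hj
  simp only [Finset.mem_filter] at hj ⊢
  exact ⟨hj.1, le_trans h hj.2⟩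

lemma Tc_congr {f g : ℕ → ℕ} (h : ∀ j, 1 ≤ j → j ≤ M → f j = g j) (c : ℕ) :
    Tc f c M = Tc g c M := by
  unfold Tc
  congr 1
  apply Finset.filter_congr
  intro j hj
  have := Finset.mem_Icc.mp hj
  rw [h j this.1 this.2]

lemma Tc_zero {f : ℕ → ℕ} {c : ℕ} (h : ∀ j, 1 ≤ j → f j < c) (M : ℕ) : Tc f c M = 0 := by
  unfold Tc
  rw [Finset.card_eq_zero, Finset.filter_eq_empty_iff]
  intro j hj
  have := Finset.mem_Icc.mp hj
  have := h j this.1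
  omega

lemma transpose_eq_Tc {f : ℕ → ℕ} {M : ℕ} (hs : Supp f M) {c : ℕ} (hc : 1 ≤ c) :
    transpose f c = Tc f c M := by
  unfold transpose Tc
  rw [show {i : ℕ | 1 ≤ i ∧ 1 ≤ c ∧ c ≤ f i}
      = ↑((Finset.Icc 1 M).filter (fun j => c ≤ f j)) from ?_]
  · exact Set.ncard_coe_finset _
  · ext i
    simp only [Set.mem_setOf_eq, Finset.coe_filter, Finset.mem_Icc]
    constructor
    · rintro ⟨h1, _, h3⟩
      refine ⟨⟨h1, ?_⟩, h3⟩
      by_contra hiM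
      have := hs i (by omega)
      omega
    · rintro ⟨⟨h1, _⟩, h3⟩
      exact ⟨h1, hc, h3⟩

lemma transpose_zero (f : ℕ → ℕ) : transpose f 0 = 0 := by
  unfold transpose
  rw [show {i : ℕ | 1 ≤ i ∧ 1 ≤ 0 ∧ 0 ≤ f i} = (∅ : Set ℕ) from ?_]
  · exact Set.ncard_empty ℕ
  · ext i; simp

lemma mult_eq_Tc {f : ℕ → ℕ} {M : ℕ} (hs : Supp f M) {i : ℕ} (hi : 1 ≤ i) :
    mult f i + Tc f (i+1) M = Tc f i M := by
  have hm : mult f i = ((Finset.Icc 1 M).filter (fun j => f j = i)).card := by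
    unfold mult
    rw [show {j : ℕ | 1 ≤ j ∧ f j = i} = ↑((Finset.Icc 1 M).filter (fun j => f j = i)) from ?_]
    · exact Set.ncard_coe_finset _
    · ext j
      simp only [Set.mem_setOf_eq, Finset.coe_filter, Finset.mem_Icc]
      constructor
      · rintro ⟨h1, h2⟩
        refine ⟨⟨h1, ?_⟩, h2⟩
        by_contra hjM
        have := hs j (by omega)
        omega
      · rintro ⟨⟨h1, _⟩, h2⟩
        exact ⟨h1, h2⟩
  have hunion : (Finset.Icc 1 M).filter (fun j => i ≤ f j)
      = ((Finset.Icc 1 M).filter (fun j => f j = i))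
        ∪ ((Finset.Icc 1 M).filter (fun j => i + 1 ≤ f j)) := by
    ext j
    simp only [Finset.mem_filter, Finset.mem_union, Finset.mem_Icc]
    constructor
    · rintro ⟨h1, h2⟩
      rcases eq_or_lt_of_le h2 with h | h
      · exact Or.inl ⟨h1, h.symm⟩
      · exact Or.inr ⟨h1, h⟩
    · rintro (⟨h1, h2⟩ | ⟨h1, h2⟩)
      · exact ⟨h1, by omega⟩
      · exact ⟨h1, by omega⟩
  have hdisj : Disjoint ((Finset.Icc 1 M).filter (fun j => f j = i))
      ((Finset.Icc 1 M).filter (fun j => i + 1 ≤ f j)) := by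
    rw [Finset.disjoint_filter]
    intro j _ h2
    omega
  unfold Tc
  rw [hunion, Finset.card_union_of_disjoint hdisj, hm]

-- ---- Phi lemmas ----

lemma Phi_zero (f : ℕ → ℕ) (M : ℕ) : Phi f 0 M = 0 := by simp [Phi]

lemma Phi_succ (f : ℕ → ℕ) (c M : ℕ) : Phi f (c+1) M = Phi f c M + Tc f (c+1) M := by
  unfold Phi Tc
  rw [Finset.card_filter, ← Finset.sum_add_distrib]
  exact Finset.sum_congr rfl fun j _ => by split_ifs <;> omega

lemma Phi_mono_c (f : ℕ → ℕ) {c c' : ℕ} (h : c ≤ c') (M : ℕ) : Phi f c M ≤ Phi f c' M :=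
  Finset.sum_le_sum fun j _ => by omega

lemma Phi_le_S (f : ℕ → ℕ) (c M : ℕ) : Phi f c M ≤ S f M :=
  Finset.sum_le_sum fun j _ => by omega

lemma Phi_stab {f : ℕ → ℕ} {c : ℕ} (h : ∀ j, 1 ≤ j → f j ≤ c) (M : ℕ) : Phi f c M = S f M :=
  Finset.sum_congr rfl fun j hj => by
    have := (Finset.mem_Icc.mp hj).1
    have := h j this
    omega

lemma Phi_sumTc (f : ℕ → ℕ) (c M : ℕ) : Phi f c M = ∑ i ∈ Finset.Icc 1 c, Tc f i M := by
  induction c with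
  | zero => simp [Phi_zero]
  | succ c ih =>
    rw [Phi_succ, ih, Finset.sum_Icc_succ_top (by omega : 1 ≤ c + 1)]

lemma sum_split (g : ℕ → ℕ) {k M : ℕ} (hkM : k ≤ M) :
    (∑ j ∈ Finset.Icc 1 M, g j)
      = (∑ j ∈ Finset.Icc 1 k, g j) + ∑ j ∈ Finset.Icc (k+1) M, g j := by
  have h0 : ∀ m : ℕ, Finset.Icc 1 m = Finset.Ioc 0 m := fun m => Finset.Icc_add_one_left_eq_Ioc 0 m
  have h1 : Finset.Icc (k+1) M = Finset.Ioc k M := Finset.Icc_add_one_left_eq_Ioc k M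
  rw [h0, h0, h1, Finset.sum_Ioc_consecutive g (Nat.zero_le k) hkM]

lemma Phi_attain {f : ℕ → ℕ} {c k M : ℕ}
    (h1 : ∀ j, 1 ≤ j → j ≤ k → c ≤ f j) (h2 : ∀ j, k < j → f j ≤ c) (hkM : k ≤ M) :
    Phi f c M + S f k = S f M + k * c := by
  have e1 : ∑ j ∈ Finset.Icc 1 k, min (f j) c = k * c := by
    have hc : ∀ j ∈ Finset.Icc 1 k, min (f j) c = c := by
      intro j hj
      have hm := Finset.mem_Icc.mp hj
      have := h1 j hm.1 hm.2
      omega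
    rw [Finset.sum_congr rfl hc, Finset.sum_const, Nat.card_Icc, smul_eq_mul,
      Nat.add_sub_cancel]
  have e2 : ∑ j ∈ Finset.Icc (k+1) M, min (f j) c = ∑ j ∈ Finset.Icc (k+1) M, f j := by
    apply Finset.sum_congr rfl
    intro j hj
    have hm := Finset.mem_Icc.mp hj
    have := h2 j (by omega)
    omega
  unfold Phi S
  rw [sum_split (fun j => min (f j) c) hkM, sum_split f hkM, e1, e2]
  omega

lemma Phi_bound (f : ℕ → ℕ) {k M : ℕ} (c : ℕ) (hkM : k ≤ M) :
    S f k + Phi f c M ≤ S f M + k * c := by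
  unfold Phi S
  rw [sum_split (fun j => min (f j) c) hkM, sum_split f hkM]
  have e1 : ∑ j ∈ Finset.Icc 1 k, min (f j) c ≤ k * c := by
    calc ∑ j ∈ Finset.Icc 1 k, min (f j) c ≤ ∑ _j ∈ Finset.Icc 1 k, c :=
          Finset.sum_le_sum fun j _ => by omega
      _ = k * c := by
          rw [Finset.sum_const, Nat.card_Icc, smul_eq_mul, Nat.add_sub_cancel]
  have e2 : ∑ j ∈ Finset.Icc (k+1) M, min (f j) c ≤ ∑ j ∈ Finset.Icc (k+1) M, f j :=
    Finset.sum_le_sum fun j _ => by omega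
  omega

lemma findGreatest_zero_or {P : ℕ → Prop} [DecidablePred P] :
    ∀ n, Nat.findGreatest P n = 0 ∨ P (Nat.findGreatest P n) := by
  intro n
  induction n with
  | zero => exact Or.inl rfl
  | succ n ih =>
    rw [Nat.findGreatest_succ]
    split_ifs with h
    · exact Or.inr h
    · exact ih

lemma exists_threshold {f : ℕ → ℕ} {M : ℕ} (hm : Mono1 f) (hs : Supp f M) (c : ℕ) :
    ∃ k, k ≤ M ∧ (∀ j, 1 ≤ j → j ≤ k → c + 1 ≤ f j) ∧ (∀ j, k < j → f j ≤ c) := by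
  classical
  refine ⟨Nat.findGreatest (fun j => c + 1 ≤ f j) M, Nat.findGreatest_le M, ?_, ?_⟩
  · intro j hj1 hjk
    rcases findGreatest_zero_or (P := fun j => c + 1 ≤ f j) M with h | h
    · omega
    · have := hm hj1 hjk
      omega
  · intro j hkj
    by_cases hjM : j ≤ M
    · have := Nat.findGreatest_is_greatest (P := fun j => c + 1 ≤ f j) hkj hjM
      omega
    · rw [hs j (by omega)]
      omega

lemma Phi_flip {f g : ℕ → ℕ} {M : ℕ} (hmf : Mono1 f) (hsf : Supp f M)
    (hdom : ∀ k, S f k ≤ S g k) (htot : S f M = S g M) (c : ℕ) :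
    Phi g c M ≤ Phi f c M := by
  obtain ⟨k, hkM, h1, h2⟩ := exists_threshold hmf hsf c
  have ha : Phi f c M + S f k = S f M + k * c :=
    Phi_attain (fun j hj hjk => le_trans (by omega) (h1 j hj hjk)) h2 hkM
  have hb : S g k + Phi g c M ≤ S g M + k * c := Phi_bound g c hkM
  have := hdom k
  omega

lemma Phi_unflip {f g : ℕ → ℕ} {M : ℕ} (hmg : Mono1 g) (hsf : Supp f M) (hsg : Supp g M)
    (htot : S f M = S g M) (hphi : ∀ c, Phi g c M ≤ Phi f c M) : ∀ k, S f k ≤ S g k := by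
  intro k
  rcases le_or_gt k M with hkM | hkM
  · have ha : Phi g (g (k+1)) M + S g k = S g M + k * g (k+1) :=
      Phi_attain (fun j hj hjk => hmg hj (by omega))
        (fun j hkj => hmg (by omega) (by omega)) hkM
    have hb : S f k + Phi f (g (k+1)) M ≤ S f M + k * g (k+1) := Phi_bound f _ hkM
    have := hphi (g (k+1))
    omega
  · rw [S_stab hsf (le_of_lt hkM), S_stab hsg (le_of_lt hkM)]
    omega

lemma Phi_parity {f : ℕ → ℕ} {M : ℕ} (hm : Mono1 f) (hs : Supp f M) (ho : Orth f)
    (htot : Odd (S f M)) : ∀ c, Odd c → Odd (Phi f c M) := by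
  have stab : ∀ c, f 1 ≤ c → Phi f c M = S f M := fun c hc =>
    Phi_stab (fun j hj => le_trans (hm le_rfl hj) hc) M
  have key : ∀ t c, Odd c → f 1 ≤ c + 2*t → Odd (Phi f c M) := by
    intro t
    induction t with
    | zero =>
      intro c hc hb
      rw [stab c (by omega)]
      exact htot
    | succ t ih =>
      intro c hc hb
      rcases le_or_gt (f 1) c with h | h
      · rw [stab c h]; exact htot
      · have h2 : Odd (Phi f (c+2) M) := by
          apply ih (c+2)
          · rw [Nat.odd_iff] at hc ⊢; omega
          · omega
        have e1 : Phi f (c+2) M = Phi f c M + Tc f (c+1) M + Tc f (c+2) M := by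
          rw [show c+2 = (c+1)+1 from rfl, Phi_succ, Phi_succ]
        have e2 : mult f (c+1) + Tc f (c+2) M = Tc f (c+1) M := mult_eq_Tc hs (by omega)
        have e3 : Even (mult f (c+1)) := by
          apply ho (c+1) _ (by omega)
          rw [Nat.odd_iff] at hc
          rw [Nat.even_iff]
          omega
        rw [Nat.odd_iff] at h2 ⊢
        rw [Nat.even_iff] at e3
        omega
  intro c hc
  exact key (f 1) c hc (by omega)

lemma Phi_even {f : ℕ → ℕ} {M : ℕ} (hev : ∀ j, 1 ≤ j → Even (f j)) {u : ℕ} (hu : Even u) :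
    Even (Phi f u M) := by
  unfold Phi
  apply Finset.sum_induction _ Even (fun a b ha hb => ha.add hb) Even.zero
  intro j hj
  have h1 := hev j (Finset.mem_Icc.mp hj).1
  rcases min_choice (f j) u with h | h <;> rw [h]
  · exact h1
  · exact hu

lemma Tc_odd_even {f : ℕ → ℕ} {M : ℕ} (hev : ∀ j, 1 ≤ j → Even (f j)) {u : ℕ} (hu : Odd u) :
    Tc f (u+1) M = Tc f u M := by
  have hfe : (Finset.Icc 1 M).filter (fun j => u + 1 ≤ f j)
      = (Finset.Icc 1 M).filter (fun j => u ≤ f j) := by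
    apply Finset.filter_congr
    intro j hj
    have h1 := hev j (Finset.mem_Icc.mp hj).1
    rw [Nat.even_iff] at h1
    rw [Nat.odd_iff] at hu
    constructor <;> intro h <;> omega
  unfold Tc
  rw [hfe]

lemma Tc_Tc {f : ℕ → ℕ} {M : ℕ} (hm : Mono1 f) (hs : Supp f M) {i : ℕ} (hi : 1 ≤ i)
    (hfi : f i ≤ M) : Tc (fun j => Tc f j M) i M = f i := by
  have key : ∀ j, 1 ≤ j → (i ≤ Tc f j M ↔ j ≤ f i) := by
    intro j hj
    constructor
    · intro h
      by_contra hc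
      push_neg at hc
      have hsub : (Finset.Icc 1 M).filter (fun j' => j ≤ f j') ⊆ Finset.Icc 1 (i-1) := by
        intro j' hj'
        simp only [Finset.mem_filter, Finset.mem_Icc] at hj' ⊢
        refine ⟨hj'.1.1, ?_⟩
        by_contra hge
        have h2 : i ≤ j' := by omega
        have := hm hi h2
        omega
      have hcard := Finset.card_le_card hsub
      rw [Nat.card_Icc] at hcard
      unfold Tc at h
      omega
    · intro h
      have hiM : i ≤ M := by
        by_contra hMi
        rw [hs i (by omega)] at h
        omega
      have hsub : Finset.Icc 1 i ⊆ (Finset.Icc 1 M).filter (fun j' => j ≤ f j') := by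
        intro j' hj'
        simp only [Finset.mem_Icc] at hj'
        simp only [Finset.mem_filter, Finset.mem_Icc]
        exact ⟨⟨hj'.1, by omega⟩, le_trans h (hm hj'.1 hj'.2)⟩
      have hcard := Finset.card_le_card hsub
      rw [Nat.card_Icc] at hcard
      unfold Tc
      omega
  have hfe : (Finset.Icc 1 M).filter (fun j => i ≤ Tc f j M)
      = (Finset.Icc 1 M).filter (fun j => j ≤ f i) := by
    apply Finset.filter_congr
    intro j hj
    exact key j (Finset.mem_Icc.mp hj).1
  have hfe2 : ((Finset.Icc 1 M).filter (fun j => j ≤ f i)) = Finset.Icc 1 (f i) := by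
    ext j
    simp only [Finset.mem_filter, Finset.mem_Icc]
    omega
  show ((Finset.Icc 1 M).filter (fun j => i ≤ Tc f j M)).card = f i
  rw [hfe, hfe2, Nat.card_Icc]
  omega

lemma Phi_superadd (f g : ℕ → ℕ) (u w M : ℕ) :
    Phi f u M + Phi g w M ≤ Phi (fun j => f j + g j) (u+w) M := by
  unfold Phi
  rw [← Finset.sum_add_distrib]
  refine Finset.sum_le_sum fun j _ => ?_
  change min (f j) u + min (g j) w ≤ min (f j + g j) (u + w)
  omega


/-- Lemma 1.8: `d(cup(𝛌)) = ind(d(𝛌))`. -/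
theorem stmt2 (t : ℕ) (nn : Fin t → ℕ) (n0 n : ℕ)
    (hn : n = (∑ j, nn j) + n0)
    (lam : Fin t → ℕ → ℕ) (hlam : ∀ j, IsPartition (lam j) (nn j))
    (lam0 : ℕ → ℕ) (hlam0 : IsPartition lam0 (2*n0)) (hsymp0 : Symp lam0)
    (cup : ℕ → ℕ)
    (hcup : cup = transpose (fun k => (∑ j, 2 * transpose (lam j) k) + transpose lam0 k))
    (dcup d0 indd : ℕ → ℕ)
    (hdcup : IsSympDual dcup n cup)
    (hd0 : IsSympDual d0 n0 lam0)
    (hindd : IsDualOf indd (2*n+1) (fun k => (∑ j, 2 * transpose (lam j) k) + d0 k)) :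
    ∀ k, 1 ≤ k → dcup k = indd k := by
  classical
  obtain ⟨⟨hdcupP, hdcupO, hdcupD⟩, hdcupMax⟩ := hdcup
  obtain ⟨⟨hd0P, hd0O, hd0D⟩, hd0Max⟩ := hd0
  obtain ⟨⟨hinddP, hinddO, hinddD⟩, hinddMax⟩ := hindd
  set Nsum : ℕ := ∑ j, nn j with hNsum
  set M : ℕ := 2*n + 2 with hM
  set A : ℕ → ℕ := fun k => ∑ j, 2 * transpose (lam j) k with hA
  set τ : ℕ → ℕ := fun k => transpose lam0 k + transpose one1 k with hτ
  have hnn_le : ∀ j, nn j ≤ Nsum := fun j =>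
    Finset.single_le_sum (f := nn) (fun i _ => Nat.zero_le _) (Finset.mem_univ j)
  -- basic bounds for the partitions
  have hdcupSupp : Supp dcup M := (IsPartition.supp hdcupP).mono (by omega)
  have hdcupTot : S dcup M = 2*n+1 := hdcupP.total' (by omega)
  have hn0n : n0 ≤ n := by omega
  have hd0Supp : Supp d0 M := (IsPartition.supp hd0P).mono (by omega)
  have hd0Tot : S d0 M = 2*n0+1 := hd0P.total' (by omega)
  -- transposes of the lam j
  have htlam_eq : ∀ (j : Fin t) (k : ℕ), 1 ≤ k → transpose (lam j) k = Tc (lam j) k M :=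
    fun j k hk => transpose_eq_Tc ((hlam j).supp.mono (by have := hnn_le j; omega)) hk
  have htlam_le : ∀ (j : Fin t) (k : ℕ), 1 ≤ k → transpose (lam j) k ≤ nn j := by
    intro j k hk
    rw [htlam_eq j k hk]
    exact Tc_le_supp (hlam j).supp hk M
  have htlam_zero : ∀ (j : Fin t) (k : ℕ), n < k → transpose (lam j) k = 0 := by
    intro j k hk
    rw [htlam_eq j k (by omega)]
    exact Tc_zero (fun i hi => by
      have h1 := (hlam j).val_le hi
      have := hnn_le j
      omega) M
  -- properties of A
  have hAmono : Mono1 A := by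
    intro j k hj hjk
    simp only [hA]
    apply Finset.sum_le_sum
    intro i _
    have h1 : transpose (lam i) k ≤ transpose (lam i) j := by
      rw [htlam_eq i k (by omega), htlam_eq i j hj]
      exact Tc_anti (lam i) hjk M
    omega
  have hAsupp : Supp A n := by
    intro k hk
    simp only [hA]
    exact Finset.sum_eq_zero fun i _ => by rw [htlam_zero i k hk]; omega
  have hAval : ∀ k, 1 ≤ k → A k ≤ 2*Nsum := by
    intro k hk
    have h1 : A k ≤ ∑ j, 2 * nn j := by
      simp only [hA]
      exact Finset.sum_le_sum fun i _ => by have := htlam_le i k hk; omega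
    have h2 : ∑ j, 2 * nn j = 2 * Nsum := by rw [hNsum, Finset.mul_sum]
    omega
  have hAeven : ∀ k, 1 ≤ k → Even (A k) := by
    intro k _
    simp only [hA]
    exact Finset.sum_induction _ Even (fun a b ha hb => ha.add hb) Even.zero
      (fun i _ => even_two_mul _)
  have hAtot : S A M = 2 * Nsum := by
    have h1 : ∀ j : Fin t, ∑ k ∈ Finset.Icc 1 M, transpose (lam j) k = nn j := by
      intro j
      have hc : ∀ k ∈ Finset.Icc 1 M, transpose (lam j) k = Tc (lam j) k M :=
        fun k hk => htlam_eq j k (Finset.mem_Icc.mp hk).1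
      rw [Finset.sum_congr rfl hc, ← Phi_sumTc,
        Phi_stab (fun i hi => by have := (hlam j).val_le hi; have := hnn_le j; omega) M]
      exact (hlam j).total' (by have := hnn_le j; omega)
    calc S A M = ∑ k ∈ Finset.Icc 1 M, ∑ j, 2 * transpose (lam j) k := by
          simp only [S, hA]
      _ = ∑ j, ∑ k ∈ Finset.Icc 1 M, 2 * transpose (lam j) k := Finset.sum_comm
      _ = ∑ j, 2 * nn j := by
          refine Finset.sum_congr rfl fun j _ => ?_
          rw [← Finset.mul_sum, h1 j]
      _ = 2 * Nsum := by rw [hNsum, Finset.mul_sum]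
  -- transpose of one1
  have hone1T : ∀ k, transpose one1 k = if k = 1 then 1 else 0 := by
    intro k
    rcases Nat.eq_zero_or_pos k with hk | hk
    · subst hk
      rw [transpose_zero]
      simp
    by_cases hk1 : k = 1
    · subst hk1
      have hset : {i : ℕ | 1 ≤ i ∧ 1 ≤ 1 ∧ 1 ≤ one1 i} = {1} := by
        ext i
        simp only [Set.mem_setOf_eq, Set.mem_singleton_iff, one1]
        constructor
        · rintro ⟨h1, -, h3⟩
          by_contra hne
          simp only [if_neg hne] at h3
          omega
        · rintro rfl
          simp
      show Set.ncard {i : ℕ | 1 ≤ i ∧ 1 ≤ 1 ∧ 1 ≤ one1 i} = if (1:ℕ) = 1 then 1 else 0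
      rw [hset, Set.ncard_singleton, if_pos rfl]
    · have hset : {i : ℕ | 1 ≤ i ∧ 1 ≤ k ∧ k ≤ one1 i} = ∅ := by
        ext i
        simp only [Set.mem_setOf_eq, Set.mem_empty_iff_false, iff_false, not_and, one1]
        intro h1 h2
        split_ifs <;> omega
      simp only [transpose, hset, Set.ncard_empty, if_neg hk1]
  -- transpose of lam0
  have htl0_eq : ∀ k, 1 ≤ k → transpose lam0 k = Tc lam0 k M :=
    fun k hk => transpose_eq_Tc (hlam0.supp.mono (by omega)) hk
  have htl0_le : ∀ k, 1 ≤ k → transpose lam0 k ≤ 2*n0 := by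
    intro k hk
    rw [htl0_eq k hk]
    exact Tc_le_supp hlam0.supp hk M
  have htl0_zero : ∀ k, 2*n0 < k → transpose lam0 k = 0 := by
    intro k hk
    rw [htl0_eq k (by omega)]
    exact Tc_zero (fun i hi => by have := hlam0.val_le hi; omega) M
  -- properties of τ
  have hτmono : Mono1 τ := by
    intro j k hj hjk
    simp only [hτ]
    have h1 : transpose lam0 k ≤ transpose lam0 j := by
      rw [htl0_eq k (by omega), htl0_eq j hj]
      exact Tc_anti lam0 hjk M
    rw [hone1T k, hone1T j]
    split_ifs <;> omega
  have hτsupp : Supp τ (2*n0+1) := by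
    intro k hk
    simp only [hτ]
    rw [htl0_zero k (by omega), hone1T k, if_neg (by omega)]
  have hτval : ∀ k, 1 ≤ k → τ k ≤ 2*n0+1 := by
    intro k hk
    simp only [hτ]
    have := htl0_le k hk
    rw [hone1T k]
    split_ifs <;> omega
  have hτtot : S τ M = 2*n0+1 := by
    have h0 : S τ M = S (transpose lam0) M + S (transpose one1) M := by
      simp only [hτ]
      exact S_add _ _ M
    have h1 : S (transpose lam0) M = 2*n0 := by
      have hc : ∀ k ∈ Finset.Icc 1 M, transpose lam0 k = Tc lam0 k M :=
        fun k hk => htl0_eq k (Finset.mem_Icc.mp hk).1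
      show (∑ k ∈ Finset.Icc 1 M, transpose lam0 k) = 2*n0
      rw [Finset.sum_congr rfl hc, ← Phi_sumTc,
        Phi_stab (fun i hi => by have := hlam0.val_le hi; omega) M]
      exact hlam0.total' (by omega)
    have h2 : S (transpose one1) M = 1 := by
      show (∑ k ∈ Finset.Icc 1 M, transpose one1 k) = 1
      rw [Finset.sum_congr rfl (fun k _ => hone1T k), Finset.sum_ite_eq']
      rw [if_pos (by simp only [Finset.mem_Icc]; omega)]
    omega
  -- double transpose
  have DT : ∀ h : ℕ → ℕ, Mono1 h → Supp h M → (∀ k, 1 ≤ k → h k ≤ M) →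
      ∀ k, 1 ≤ k → transpose (transpose h) k = h k := by
    intro h hm hsp hv k hk
    have hTsupp : Supp (transpose h) M := by
      intro j hj
      rw [transpose_eq_Tc hsp (by omega : 1 ≤ j)]
      apply Tc_zero
      intro i hi
      have h1 : h i ≤ h 1 := hm le_rfl hi
      have h2 : h 1 ≤ M := hv 1 le_rfl
      omega
    rw [transpose_eq_Tc hTsupp hk, Tc_congr (fun j hj _ => transpose_eq_Tc hsp hj) k]
    exact Tc_Tc hm hsp hk (hv k hk)
  -- E1 : the dominating sequence for d0
  have hE1 : ∀ k, 1 ≤ k → transpose (unionP lam0 one1) k = τ k := by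
    intro k hk
    have h1 : unionP lam0 one1 = transpose τ := by rw [hτ]; rfl
    rw [h1]
    exact DT τ hτmono (hτsupp.mono (by omega)) (fun k hk => le_trans (hτval k hk) (by omega)) k hk
  -- E2 : the dominating sequence for dcup
  have hAcupmono : Mono1 (fun k => A k + transpose lam0 k) := by
    intro j k hj hjk
    show A k + transpose lam0 k ≤ A j + transpose lam0 j
    have h1 := hAmono hj hjk
    have h2 : transpose lam0 k ≤ transpose lam0 j := by
      rw [htl0_eq k (by omega), htl0_eq j hj]
      exact Tc_anti lam0 hjk M
    omega
  have hAcupsupp : Supp (fun k => A k + transpose lam0 k) M := by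
    intro k hk
    show A k + transpose lam0 k = 0
    have h1 := hAsupp k (by omega)
    have h2 := htl0_zero k (by omega)
    omega
  have hAcupval : ∀ k, 1 ≤ k → (fun k => A k + transpose lam0 k) k ≤ M := by
    intro k hk
    show A k + transpose lam0 k ≤ M
    have := hAval k hk
    have := htl0_le k hk
    omega
  have hcupT : ∀ j, 1 ≤ j → transpose cup j = A j + transpose lam0 j := by
    intro j hj
    have hfe : (fun k => (∑ j, 2 * transpose (lam j) k) + transpose lam0 k)
        = (fun k => A k + transpose lam0 k) := by
      funext k
      simp only [hA]
    rw [hcup, hfe]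
    exact DT _ hAcupmono hAcupsupp hAcupval j hj
  have hATmono : Mono1 (fun k => A k + τ k) := by
    intro j k hj hjk
    show A k + τ k ≤ A j + τ j
    have h1 := hAmono hj hjk
    have h2 := hτmono hj hjk
    omega
  have hATsupp : Supp (fun k => A k + τ k) M := by
    intro k hk
    show A k + τ k = 0
    have h1 := hAsupp k (by omega)
    have h2 := hτsupp k (by omega)
    omega
  have hATval : ∀ k, 1 ≤ k → (fun k => A k + τ k) k ≤ M := by
    intro k hk
    show A k + τ k ≤ M
    have := hAval k hk
    have := hτval k hk
    omega
  have hE2 : ∀ k, 1 ≤ k → transpose (unionP cup one1) k = A k + τ k := by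
    intro k hk
    have hW : (fun j => transpose cup j + transpose one1 j) = (fun j => A j + τ j) := by
      funext j
      rcases Nat.eq_zero_or_pos j with hj | hj
      · subst hj
        have hA0 : A 0 = 0 := by
          simp only [hA]
          exact Finset.sum_eq_zero fun i _ => by rw [transpose_zero]; omega
        have hτ0 : τ 0 = 0 := by simp only [hτ]; rw [transpose_zero, transpose_zero]
        rw [transpose_zero, transpose_zero, hA0, hτ0]
      · rw [hcupT j hj]
        simp only [hτ]
        omega
    have h1 : unionP cup one1 = transpose (fun j => A j + τ j) := by
      show transpose (fun j => transpose cup j + transpose one1 j) = _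
      rw [hW]
    rw [h1]
    exact DT _ hATmono hATsupp hATval k hk
  -- dominance facts in terms of A, τ
  have hdcupDom : ∀ k, S dcup k ≤ S A k + S τ k := by
    intro k
    have h1 := hdcupD k
    have h2 : S (transpose (unionP cup one1)) k = S A k + S τ k := by
      rw [S_congr (fun j hj => hE2 j hj) k, S_add]
    omega
  have hd0Dom : ∀ k, S d0 k ≤ S τ k := by
    intro k
    have h1 := hd0D k
    have h2 : S (transpose (unionP lam0 one1)) k = S τ k := S_congr (fun j hj => hE1 j hj) k
    omega
  -- Phi comparisons
  have hATtot : S (fun j => A j + τ j) M = 2*n+1 := by rw [S_add, hAtot, hτtot]; omega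
  have hPhiD : ∀ c, Phi (fun j => A j + τ j) c M ≤ Phi dcup c M := by
    intro c
    exact Phi_flip hdcupP.mono hdcupSupp (fun k => by rw [S_add]; exact hdcupDom k)
      (by rw [hdcupTot, hATtot]) c
  have H1 : ∀ u w, Phi A u M + Phi τ w M ≤ Phi dcup (u+w) M := fun u w =>
    le_trans (Phi_superadd A τ u w M) (hPhiD (u+w))
  have hdcupOdd : ∀ c, Odd c → Odd (Phi dcup c M) :=
    Phi_parity hdcupP.mono hdcupSupp hdcupO (by rw [hdcupTot]; exact ⟨n, rfl⟩)
  have hd0Odd : ∀ c, Odd c → Odd (Phi d0 c M) :=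
    Phi_parity hd0P.mono hd0Supp hd0O (by rw [hd0Tot]; exact ⟨n0, rfl⟩)
  have hAEven : ∀ u, Even u → Even (Phi A u M) := fun u hu => Phi_even hAeven hu
  have hPhiτd0 : ∀ c, Phi τ c M ≤ Phi d0 c M :=
    Phi_flip hd0P.mono hd0Supp hd0Dom (by rw [hd0Tot, hτtot]) 
  -- ======== the key inequality (hard direction), even shift ========
  have H2 : ∀ u, Even u → ∀ c, Phi A u M + Phi d0 c M ≤ Phi dcup (u + c) M := by
    intro u hu
    have hgle : ∀ c, Phi A u M + Phi τ c M ≤ Phi dcup (u+c) M := fun c => H1 u c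
    have hKle : ∀ c, Phi A u M ≤ Phi dcup (u+c) M := fun c => le_trans (by omega) (hgle c)
    set F : ℕ → ℕ := fun c => min (Phi dcup (u+c) M - Phi A u M) (Phi d0 c M) with hF
    have hF0 : F 0 = 0 := by
      simp only [hF]
      rw [Phi_zero]
      omega
    have hFmono : ∀ c c', c ≤ c' → F c ≤ F c' := by
      intro c c' h
      simp only [hF]
      have h1 : Phi dcup (u+c) M ≤ Phi dcup (u+c') M := Phi_mono_c dcup (by omega) M
      have h2 : Phi d0 c M ≤ Phi d0 c' M := Phi_mono_c d0 h M
      omega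
    have hFτ : ∀ c, Phi τ c M ≤ F c := by
      intro c
      simp only [hF]
      have h1 := hgle c
      have h2 := hPhiτd0 c
      omega
    have hFconc : ∀ c, F (c+2) + F c ≤ 2 * F (c+1) := by
      intro c
      simp only [hF]
      have i1 : u+(c+1) = u+c+1 := by omega
      have i2 : u+(c+2) = u+c+2 := by omega
      rw [i1, i2]
      have e1 : Phi dcup (u+c+1) M = Phi dcup (u+c) M + Tc dcup (u+c+1) M := Phi_succ dcup (u+c) M
      have e2 : Phi dcup (u+c+2) M = Phi dcup (u+c+1) M + Tc dcup (u+c+2) M := Phi_succ dcup (u+c+1) M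
      have e3 : Tc dcup (u+c+2) M ≤ Tc dcup (u+c+1) M := Tc_anti dcup (by omega) M
      have e4 : Phi d0 (c+1) M = Phi d0 c M + Tc d0 (c+1) M := Phi_succ d0 c M
      have e5 : Phi d0 (c+2) M = Phi d0 (c+1) M + Tc d0 (c+2) M := Phi_succ d0 (c+1) M
      have e6 : Tc d0 (c+2) M ≤ Tc d0 (c+1) M := Tc_anti d0 (by omega) M
      have e7 := hKle c
      omega
    set ρ : ℕ → ℕ := fun c => F c - F (c-1) with hρ
    have hρ_succ : ∀ c, ρ (c+1) = F (c+1) - F c := by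
      intro c
      simp only [hρ, Nat.add_sub_cancel]
    have hρmono : Mono1 ρ := by
      have step : ∀ c, 1 ≤ c → ρ (c+1) ≤ ρ c := by
        intro c hc
        obtain ⟨d, rfl⟩ : ∃ d, c = d+1 := ⟨c-1, by omega⟩
        rw [hρ_succ (d+1), hρ_succ d]
        have h1 := hFconc d
        rw [show d+2 = d+1+1 from rfl] at h1
        have h2 := hFmono d (d+1) (by omega)
        have h3 := hFmono (d+1) (d+2) (by omega)
        omega
      intro j k hj hjk
      induction k, hjk using Nat.le_induction with
      | base => exact le_rfl
      | succ k hk ih => exact le_trans (step k (by omega)) ih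
    have hρS : ∀ c, S ρ c = F c := by
      intro c
      induction c with
      | zero => rw [S_zero, hF0]
      | succ c ih =>
        rw [S_succ, ih, hρ_succ c]
        have := hFmono c (c+1) (by omega)
        omega
    have hFstab : ∀ c, 2*n+1 ≤ c → F c = 2*n0+1 := by
      intro c hc
      simp only [hF]
      have h1 : Phi d0 c M = 2*n0+1 := by
        rw [Phi_stab (fun j hj => by have := hd0P.val_le hj; omega) M]
        exact hd0Tot
      have h2 : Phi τ c M = 2*n0+1 := by
        rw [Phi_stab (fun j hj => by have := hτval j hj; omega) M]
        exact hτtot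
      have h3 := hgle c
      have h4 := hPhiτd0 c
      simp only [hF] at *
      omega
    have hρsupp : Supp ρ M := by
      intro c hc
      simp only [hρ]
      rw [hFstab c (by omega), hFstab (c-1) (by omega)]
      omega
    have hρval : ∀ c, 1 ≤ c → ρ c ≤ 2*n0+1 := by
      intro c hc
      have h1 : F c ≤ Phi d0 c M := by simp only [hF]; omega
      have h2 : Phi d0 c M ≤ S d0 M := Phi_le_S d0 c M
      simp only [hρ]
      omega
    set σ : ℕ → ℕ := fun j => Tc ρ j M with hσ
    have hσmono : Mono1 σ := fun j k hj hjk => Tc_anti ρ hjk M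
    have hσsupp : Supp σ (2*n0+1) := by
      intro j hj
      simp only [hσ]
      exact Tc_zero (fun c hc => by have := hρval c hc; omega) M
    have hσTc : ∀ i, 1 ≤ i → Tc σ i M = ρ i := by
      intro i hi
      simp only [hσ]
      exact Tc_Tc hρmono hρsupp hi (le_trans (hρval i hi) (by omega))
    have hσPhi : ∀ c, Phi σ c M = F c := by
      intro c
      rw [Phi_sumTc σ c M, Finset.sum_congr rfl (fun i hi => hσTc i (Finset.mem_Icc.mp hi).1)]
      exact hρS c
    have hσval : ∀ j, 1 ≤ j → σ j ≤ M := by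
      intro j hj
      simp only [hσ]
      exact Tc_le ρ j M
    have hσtot : S σ M = 2*n0+1 := by
      rw [← Phi_stab hσval M, hσPhi M]
      exact hFstab M (by omega)
    have hσP : IsPartition σ (2*n0+1) := by
      refine ⟨hσmono, ⟨2*n0+1, hσsupp⟩, ?_⟩
      intro m hm
      rcases le_or_gt m M with hmM | hmM
      · have h1 := S_stab (f := σ) (B := m) (k := M) hm hmM
        omega
      · have h1 := S_stab (f := σ) (B := M) (k := m) (hσsupp.mono (by omega)) (le_of_lt hmM)
        omega
    have hFodd : ∀ c, Odd c → Odd (F c) := by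
      intro c hc
      have hu2 : u % 2 = 0 := Nat.even_iff.mp hu
      have hc2 : c % 2 = 1 := Nat.odd_iff.mp hc
      have h1 : Odd (Phi dcup (u+c) M) := hdcupOdd (u+c) (Nat.odd_iff.mpr (by omega))
      have h2 : Even (Phi A u M) := hAEven u hu
      have h3 : Odd (Phi d0 c M) := hd0Odd c hc
      have h4 := hKle c
      simp only [hF]
      rw [Nat.odd_iff] at h1 h3 ⊢
      rw [Nat.even_iff] at h2
      omega
    have hσOrth : Orth σ := by
      intro i hie hi1
      have hm := mult_eq_Tc (f := σ) (hσsupp.mono (by omega : 2*n0+1 ≤ M)) hi1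
      rw [hσTc i hi1, hσTc (i+1) (by omega)] at hm
      have hi2 : i % 2 = 0 := Nat.even_iff.mp hie
      have ho1 : Odd (F (i-1)) := hFodd (i-1) (Nat.odd_iff.mpr (by omega))
      have ho2 : Odd (F (i+1)) := hFodd (i+1) (Nat.odd_iff.mpr (by omega))
      have e1 : ρ i = F i - F (i-1) := by simp only [hρ]
      have e2 : ρ (i+1) = F (i+1) - F i := hρ_succ i
      have m1 := hFmono (i-1) i (by omega)
      have m2 := hFmono i (i+1) (by omega)
      rw [Nat.even_iff]
      rw [Nat.odd_iff] at ho1 ho2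
      omega
    have hσDom : Dom σ (transpose (unionP lam0 one1)) := by
      intro k
      have h2 : S (transpose (unionP lam0 one1)) k = S τ k := S_congr (fun j hj => hE1 j hj) k
      rw [h2]
      exact Phi_unflip (M := M) hτmono (hσsupp.mono (by omega)) (hτsupp.mono (by omega))
        (by rw [hσtot, hτtot]) (fun c => by rw [hσPhi c]; exact hFτ c) k
    have hσd0 := hd0Max σ hσP hσOrth hσDom
    intro c
    have hflip : Phi d0 c M ≤ Phi σ c M :=
      Phi_flip hσmono (hσsupp.mono (by omega)) hσd0 (by rw [hσtot, hd0Tot]) c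
    rw [hσPhi c] at hflip
    simp only [hF] at hflip
    have := hKle c
    omega
  -- ======== extend to odd shifts ========
  have Hkey : ∀ u c, Phi A u M + Phi d0 c M ≤ Phi dcup (u + c) M := by
    intro u c
    rcases Nat.even_or_odd u with hu | hu
    · exact H2 u hu c
    · obtain ⟨r, rfl⟩ := hu
      have hTA : Tc A (2*r+1+1) M = Tc A (2*r+1) M := Tc_odd_even hAeven ⟨r, rfl⟩
      rcases le_or_gt (Tc dcup (2*r+1+c+1) M) (Tc A (2*r+1+1) M) with hcase | hcase
      · have h2 := H2 (2*r+1+1) ⟨r+1, by omega⟩ c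
        have e1 : Phi A (2*r+1+1) M = Phi A (2*r+1) M + Tc A (2*r+1+1) M := Phi_succ A (2*r+1) M
        have e2 : Phi dcup (2*r+1+c+1) M = Phi dcup (2*r+1+c) M + Tc dcup (2*r+1+c+1) M :=
          Phi_succ dcup (2*r+1+c) M
        rw [show 2*r+1+1+c = 2*r+1+c+1 from by omega] at h2
        omega
      · have h2 := H2 (2*r) ⟨r, by omega⟩ c
        have e1 : Phi A (2*r+1) M = Phi A (2*r) M + Tc A (2*r+1) M := Phi_succ A (2*r) M
        have e2 : Phi dcup (2*r+c+1) M = Phi dcup (2*r+c) M + Tc dcup (2*r+c+1) M :=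
          Phi_succ dcup (2*r+c) M
        have e4 : Tc dcup (2*r+1+c+1) M ≤ Tc dcup (2*r+c+1) M :=
          Tc_anti dcup (by omega) M
        rw [show 2*r+1+c = 2*r+c+1 from by omega]
        omega
  -- ======== hard dominance : dcup ≤ A + d0 ========
  have hSAd0 : ∀ k, S (fun k' => (∑ j, 2 * transpose (lam j) k') + d0 k') k = S A k + S d0 k := by
    intro k
    have hfe : (fun k' => (∑ j, 2 * transpose (lam j) k') + d0 k') = (fun k' => A k' + d0 k') := by
      funext k'
      simp only [hA]
    rw [hfe, S_add]
  have hDomFinal : Dom dcup (fun k => (∑ j, 2 * transpose (lam j) k) + d0 k) := by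
    intro k
    rw [hSAd0 k]
    rcases le_or_gt k M with hkM | hkM
    · have hAatt : Phi A (A (k+1)) M + S A k = S A M + k * A (k+1) :=
        Phi_attain (fun j hj hjk => hAmono hj (by omega)) (fun j hkj => hAmono (by omega) (by omega)) hkM
      have hDatt : Phi d0 (d0 (k+1)) M + S d0 k = S d0 M + k * d0 (k+1) :=
        Phi_attain (fun j hj hjk => hd0P.mono hj (by omega))
          (fun j hkj => hd0P.mono (by omega) (by omega)) hkM
      have hkey := Hkey (A (k+1)) (d0 (k+1))
      have hbnd : S dcup k + Phi dcup (A (k+1) + d0 (k+1)) M ≤ S dcup M + k * (A (k+1) + d0 (k+1)) :=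
        Phi_bound dcup _ hkM
      have hmul := Nat.left_distrib k (A (k+1)) (d0 (k+1))
      omega
    · rw [S_stab hdcupSupp (le_of_lt hkM), S_stab (hAsupp.mono (by omega : n ≤ M)) (le_of_lt hkM),
        S_stab hd0Supp (le_of_lt hkM)]
      omega
  -- ======== conclusion ========
  have hDomDI : Dom dcup indd := hinddMax dcup hdcupP hdcupO hDomFinal
  have hDomID : Dom indd dcup := by
    apply hdcupMax indd hinddP hinddO
    intro k
    have h1 := hinddD k
    rw [hSAd0 k] at h1
    have h3 : S (transpose (unionP cup one1)) k = S A k + S τ k := by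
      rw [S_congr (fun j hj => hE2 j hj) k, S_add]
    have h4 := hd0Dom k
    omega
  intro k hk
  obtain ⟨k', rfl⟩ : ∃ k', k = k'+1 := ⟨k-1, by omega⟩
  have e1 := S_succ dcup k'
  have e2 := S_succ indd k'
  have e3 := le_antisymm (hDomDI k') (hDomID k')
  have e4 := le_antisymm (hDomDI (k'+1)) (hDomID (k'+1))
  omega

end Wald
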